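/- Let h : ℝ^p → [0,+∞] be any penalty function (not necessarily convex) and assume there exists a solution β̂ to min_{β∈ℝ^p} (‖Xβ − y‖² + 2h(β)). Then for all t ≥ 0, F(‖X(β̂ − β*)‖) ≥ F(t); that is, the prediction error ‖X(β̂ − β*)‖ is a maximizer of the function F for every realization of the noise vector ε ∈ ℝ^n. -/

import Mathlib

open scoped ENNReal

/-- Euclidean norm of a vector in `ℝ^k`. -/
noncomputable def l2norm {k : ℕ} (v : Fin k → ℝ) : ℝ := Real.sqrt (∑ i, (v i) ^ 2)

/-- Euclidean inner product on `ℝ^k`. -/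
noncomputable def dotp {k : ℕ} (u v : Fin k → ℝ) : ℝ := ∑ i, u i * v i

/-- The function `F(t) = sup_{β : ‖X(β-β*)‖ ≤ t} (εᵀX(β-β*) - h(β)) - t²/2`,
with values in `EReal` (the sup over the empty set is `⊥ = -∞`). -/
noncomputable def Fval {n p : ℕ} (X : Matrix (Fin n) (Fin p) ℝ) (bs : Fin p → ℝ)
    (h : (Fin p → ℝ) → ℝ≥0∞) (e : Fin n → ℝ) (t : ℝ) : EReal :=
  sSup {x : EReal | ∃ b : Fin p → ℝ, l2norm (X.mulVec (b - bs)) ≤ t ∧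
      x = (dotp e (X.mulVec (b - bs)) : EReal) - (h b : EReal)} - ((t ^ 2 / 2 : ℝ) : EReal)

lemma l2norm_sq {k : ℕ} (v : Fin k → ℝ) : l2norm v ^ 2 = ∑ i, (v i) ^ 2 :=
  Real.sq_sqrt (Finset.sum_nonneg fun _ _ => sq_nonneg _)

lemma l2norm_nonneg {k : ℕ} (v : Fin k → ℝ) : 0 ≤ l2norm v := Real.sqrt_nonneg _

/-- Expansion of the squared residual. -/
lemma residual_expand {n p : ℕ} (X : Matrix (Fin n) (Fin p) ℝ) (bs : Fin p → ℝ)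
    (ε : Fin n → ℝ) (b : Fin p → ℝ) :
    l2norm (X.mulVec b - (X.mulVec bs + ε)) ^ 2 =
      l2norm (X.mulVec (b - bs)) ^ 2 - 2 * dotp ε (X.mulVec (b - bs)) + l2norm ε ^ 2 := by
  have hv : X.mulVec b - (X.mulVec bs + ε) = X.mulVec (b - bs) - ε := by
    rw [Matrix.mulVec_sub]; abel
  rw [hv, l2norm_sq, l2norm_sq, l2norm_sq, dotp, Finset.mul_sum,
    ← Finset.sum_sub_distrib, ← Finset.sum_add_distrib]
  apply Finset.sum_congr rfl
  intro i _
  simp only [Pi.sub_apply]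
  ring

/-- if `β̂` solves `min ‖Xβ - y‖² + 2h(β)` where `y = Xβ* + ε`, then for every
`t ≥ 0` we have `F(t) ≤ F(‖X(β̂ - β*)‖)`, i.e. the prediction error maximizes `F`. -/
theorem prediction_error_maximizes_F {n p : ℕ} (X : Matrix (Fin n) (Fin p) ℝ)
    (bs : Fin p → ℝ) (ε : Fin n → ℝ) (y : Fin n → ℝ) (hy : y = X.mulVec bs + ε)
    (h : (Fin p → ℝ) → ℝ≥0∞) (bhat : Fin p → ℝ)
    (hmin : ∀ b : Fin p → ℝ,
      ENNReal.ofReal (l2norm (X.mulVec bhat - y) ^ 2) + 2 * h bhat ≤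
        ENNReal.ofReal (l2norm (X.mulVec b - y) ^ 2) + 2 * h b) :
    ∀ t : ℝ, 0 ≤ t →
      Fval X bs h ε t ≤ Fval X bs h ε (l2norm (X.mulVec (bhat - bs))) := by
  intro t ht
  set th : ℝ := l2norm (X.mulVec (bhat - bs)) with hth
  -- notation
  set S : ℝ → Set EReal := fun s => {x : EReal | ∃ b : Fin p → ℝ,
      l2norm (X.mulVec (b - bs)) ≤ s ∧
      x = (dotp ε (X.mulVec (b - bs)) : EReal) - (h b : EReal)} with hS
  have hFval : ∀ s, Fval X bs h ε s = sSup (S s) - ((s ^ 2 / 2 : ℝ) : EReal) := fun s => rfl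
  rw [hFval, hFval]
  by_cases htop : h bhat = ⊤
  · -- then all h b = ⊤, so every element of S t is ⊥
    have hall : ∀ b : Fin p → ℝ, h b = ⊤ := by
      intro b
      have := hmin b
      have hL : ENNReal.ofReal (l2norm (X.mulVec bhat - y) ^ 2) + 2 * h bhat = ⊤ := by
        rw [htop]; simp
      rw [hL, top_le_iff] at this
      rcases ENNReal.add_eq_top.1 this with h1 | h1
      · exact absurd h1 ENNReal.ofReal_ne_top
      · exact (ENNReal.mul_eq_top.1 h1).elim (fun ⟨_, h2⟩ => h2)
          (fun ⟨h2, _⟩ => by norm_num at h2)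
    have hbot : sSup (S t) = ⊥ := by
      apply le_bot_iff.1
      apply sSup_le
      rintro x ⟨b, _, rfl⟩
      rw [hall b]
      simp [EReal.sub_top]
    rw [hbot]
    simp [EReal.bot_sub]
  · -- main case
    -- key real inequality from minimality
    have hkey : ∀ b : Fin p → ℝ, h b ≠ ⊤ →
        dotp ε (X.mulVec (b - bs)) - (h b).toReal - l2norm (X.mulVec (b - bs)) ^ 2 / 2 ≤
        dotp ε (X.mulVec (bhat - bs)) - (h bhat).toReal - th ^ 2 / 2 := by
      intro b hb
      have hm := hmin b
      have hRfin : ENNReal.ofReal (l2norm (X.mulVec b - y) ^ 2) + 2 * h b ≠ ⊤ := by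
        simp [ENNReal.add_eq_top, ENNReal.mul_eq_top, hb]
      have hLfin : ENNReal.ofReal (l2norm (X.mulVec bhat - y) ^ 2) + 2 * h bhat ≠ ⊤ := by
        simp [ENNReal.add_eq_top, ENNReal.mul_eq_top, htop]
      have hr := (ENNReal.toReal_le_toReal hLfin hRfin).2 hm
      rw [ENNReal.toReal_add ENNReal.ofReal_ne_top (by simp [ENNReal.mul_eq_top, htop]),
        ENNReal.toReal_add ENNReal.ofReal_ne_top (by simp [ENNReal.mul_eq_top, hb]),
        ENNReal.toReal_mul, ENNReal.toReal_mul,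
        ENNReal.toReal_ofReal (sq_nonneg _), ENNReal.toReal_ofReal (sq_nonneg _),
        ENNReal.toReal_ofNat] at hr
      rw [hy, residual_expand, residual_expand] at hr
      rw [hth]
      nlinarith [hr]
    -- now the EReal argument
    rw [EReal.sub_le_iff_le_add (Or.inl (EReal.coe_ne_bot _)) (Or.inl (EReal.coe_ne_top _))]
    apply sSup_le
    rintro x ⟨b, hbt, rfl⟩
    by_cases hb : h b = ⊤
    · rw [hb]
      simp [EReal.sub_top]
    · -- x is a real number
      have hco : ∀ c : (Fin p → ℝ), h c ≠ ⊤ →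
          ((dotp ε (X.mulVec (c - bs)) : ℝ) : EReal) - (h c : EReal)
            = ((dotp ε (X.mulVec (c - bs)) - (h c).toReal : ℝ) : EReal) := by
        intro c hc
        rw [EReal.coe_sub]
        congr 1
        conv_lhs => rw [← ENNReal.ofReal_toReal hc]
        rw [EReal.coe_ennreal_ofReal, max_eq_left ENNReal.toReal_nonneg]
      rw [hco b hb]
      -- the element corresponding to bhat lies in S th
      have hmem : ((dotp ε (X.mulVec (bhat - bs)) - (h bhat).toReal : ℝ) : EReal) ∈ S th := by
        refine ⟨bhat, le_refl _, ?_⟩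
        rw [hco bhat htop]
      have hle1 : ((dotp ε (X.mulVec (bhat - bs)) - (h bhat).toReal : ℝ) : EReal)
          ≤ sSup (S th) := le_sSup hmem
      have hsq : l2norm (X.mulVec (b - bs)) ^ 2 ≤ t ^ 2 :=
        pow_le_pow_left₀ (l2norm_nonneg _) hbt 2
      have hreal : dotp ε (X.mulVec (b - bs)) - (h b).toReal ≤
          (dotp ε (X.mulVec (bhat - bs)) - (h bhat).toReal) - th ^ 2 / 2 + t ^ 2 / 2 := by
        have := hkey b hb
        nlinarith
      calc ((dotp ε (X.mulVec (b - bs)) - (h b).toReal : ℝ) : EReal)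
          ≤ ((dotp ε (X.mulVec (bhat - bs)) - (h bhat).toReal - th ^ 2 / 2 + t ^ 2 / 2 : ℝ) :
              EReal) := EReal.coe_le_coe_iff.2 hreal
        _ = ((dotp ε (X.mulVec (bhat - bs)) - (h bhat).toReal : ℝ) : EReal)
              - ((th ^ 2 / 2 : ℝ) : EReal) + ((t ^ 2 / 2 : ℝ) : EReal) := by
            rw [← EReal.coe_sub, ← EReal.coe_add]
        _ ≤ sSup (S th) - ((th ^ 2 / 2 : ℝ) : EReal) + ((t ^ 2 / 2 : ℝ) : EReal) := by
            apply add_le_add_left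
            exact EReal.sub_le_sub hle1 (le_refl _)
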